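/- Let K be a perfect Polish space. Then the sequential monotone closure CD_ω(K)^{σm} (realized in B(K) as {f ∈ B(K) : ∃ g ∈ DBSC(K), [f≠g] at most countable}) is not uniformly complete; specifically, the principal ideal generated by the constant function 1 is not complete under the order-unit norm ||·||_{1_K}. -/

import Mathlib

/-- f is a bounded real function (member of B(K)). -/
def Bdd {K : Type*} (f : K → ℝ) : Prop := ∃ C : ℝ, ∀ x, |f x| ≤ C

/-- g is a difference of bounded semicontinuous functions. -/
def DBSC {K : Type*} [TopologicalSpace K] (g : K → ℝ) : Prop :=
  ∃ h k : K → ℝ, Bdd h ∧ Bdd k ∧ LowerSemicontinuous h ∧ LowerSemicontinuous k ∧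
    g = h - k

open Set Filter Topology Function

set_option linter.unusedVariables false
set_option linter.unusedSectionVars false

namespace Stmt15Aux


/-- the alternating sequence of values -/
noncomputable def aseq (i : ℕ) : ℝ := (-1)^i / (i+1)

lemma abs_aseq (i : ℕ) : |aseq i| = 1/(i+1) := by
  rw [aseq, abs_div, abs_pow, abs_neg, abs_one, one_pow]
  congr 1
  rw [abs_of_pos]; positivity

lemma abs_aseq_le_one (i : ℕ) : |aseq i| ≤ 1 := by
  rw [abs_aseq]
  rw [div_le_one (by positivity)]
  linarith [Nat.cast_nonneg (α := ℝ) i]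

lemma aseq_gap (i : ℕ) : 1/(i+1) ≤ |aseq (i+1) - aseq i| := by
  have h1 : aseq (i+1) - aseq i = (-1)^(i+1) * (1/(i+2) + 1/(i+1)) := by
    rw [aseq, aseq, pow_succ]
    have hi1 : ((i:ℝ)+1) ≠ 0 := by positivity
    have hi2 : ((i:ℝ)+1+1) ≠ 0 := by positivity
    push_cast
    field_simp
    ring
  rw [h1, abs_mul, abs_pow, abs_neg, abs_one, one_pow, one_mul,
    abs_of_pos (by positivity)]
  have : (0:ℝ) < 1/(i+2) := by positivity
  linarith

/-- rows ≥ i are all false -/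
def Nset (i : ℕ) : Set (ℕ → Bool) := {x | ∀ j, i ≤ j → ∀ l, x (Nat.pair j l) = false}

/-- row i nonempty, rows > i empty -/
def Lset (i : ℕ) : Set (ℕ → Bool) := Nset (i+1) \ Nset i

lemma Nset_mono {i j : ℕ} (h : i ≤ j) : Nset i ⊆ Nset j :=
  fun x hx j' hj' l => hx j' (le_trans h hj') l

lemma Lset_subset (i : ℕ) : Lset i ⊆ Nset (i+1) := fun _ hx => hx.1

lemma Lset_eq_of_mem {i j : ℕ} {x : ℕ → Bool} (hi : x ∈ Lset i) (hj : x ∈ Lset j) :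
    i = j := by
  by_contra hne
  rcases Nat.lt_or_ge i j with h | h
  · exact hj.2 (Nset_mono h hi.1 )
  · rcases Nat.lt_or_ge j i with h' | h'
    · exact hi.2 (Nset_mono h' hj.1)
    · omega

lemma isClosed_Nset (i : ℕ) : IsClosed (Nset i) := by
  have : Nset i = ⋂ (j : ℕ) (_ : i ≤ j) (l : ℕ),
      (fun x : ℕ → Bool => x (Nat.pair j l)) ⁻¹' {false} := by
    ext x; simp [Nset]
  rw [this]
  exact isClosed_iInter fun j => isClosed_iInter fun _ => isClosed_iInter fun l =>
    IsClosed.preimage (continuous_apply _) isClosed_singleton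

lemma cylinder_mem_nhds {x : ℕ → Bool} {U : Set (ℕ → Bool)} (hU : U ∈ 𝓝 x) :
    ∃ N : ℕ, ∀ y : ℕ → Bool, (∀ m, m < N → y m = x m) → y ∈ U := by
  rw [nhds_pi, Filter.mem_pi] at hU
  obtain ⟨I, hIf, t, ht, hsub⟩ := hU
  obtain ⟨b, hb⟩ := hIf.bddAbove
  refine ⟨b+1, fun y hy => hsub ?_⟩
  intro m hm
  have hmb : m ≤ b := hb hm
  have : y m = x m := hy m (by omega)
  rw [this]
  have := ht m
  rwa [nhds_discrete, Filter.mem_pure] at this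

lemma not_countable_univ_bool : ¬ (Set.univ : Set (ℕ → Bool)).Countable := by
  intro h
  rw [Set.countable_univ_iff] at h
  obtain ⟨f, hf⟩ := exists_surjective_nat (ℕ → Bool)
  obtain ⟨n, hn⟩ := hf (fun m => !(f m m))
  have := congrFun hn n
  cases hb : f n n <;> simp [hb] at this



variable {K : Type*} [TopologicalSpace K] [T2Space K]

lemma exists_next (φ : (ℕ → Bool) → K) (hφc : Continuous φ) (hφi : Injective φ)
    {C : Set K} (hC : C.Countable) (i : ℕ) {y : ℕ → Bool} (hy : y ∈ Nset i)
    {V : Set K} (hV : V ∈ 𝓝 (φ y)) :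
    ∃ z, z ∈ Lset i ∧ φ z ∈ V ∧ φ z ∉ C := by
  have hpre : φ ⁻¹' V ∈ 𝓝 y := hφc.continuousAt.preimage_mem_nhds hV
  obtain ⟨Nb, hNb⟩ := cylinder_mem_nhds hpre
  -- the modification map
  set Z : (ℕ → Bool) → (ℕ → Bool) :=
    fun w m => if (Nat.unpair m).1 = i then w (Nat.unpair m).2 else y m with hZ
  have hZrow : ∀ w l, Z w (Nat.pair i l) = w l := by
    intro w l; simp [hZ, Nat.unpair_pair]
  have hZrow' : ∀ w j l, j ≠ i → Z w (Nat.pair j l) = y (Nat.pair j l) := by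
    intro w j l hj; simp [hZ, Nat.unpair_pair, hj]
  have hZinj : Injective Z := by
    intro w w' hww
    funext l
    have := congrFun hww (Nat.pair i l)
    rwa [hZrow, hZrow] at this
  -- the shift map
  set σ : (ℕ → Bool) → (ℕ → Bool) :=
    fun v l => if l < Nb then false else v (l - Nb) with hσ
  have hσval : ∀ v l, σ v (l + Nb) = v l := by
    intro v l; simp [hσ]
  have hσinj : Injective σ := by
    intro v v' hvv
    funext l
    have := congrFun hvv (l + Nb)
    rwa [hσval, hσval] at this
  -- properties of Z (σ v) for v with some true value
  have key : ∀ v : ℕ → Bool, (∃ l, v l = true) →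
      Z (σ v) ∈ Lset i ∧ φ (Z (σ v)) ∈ V := by
    intro v ⟨l0, hl0⟩
    have hyN : ∀ j l, i ≤ j → y (Nat.pair j l) = false := fun j l hj => hy j hj l
    have hcyl : ∀ m, m < Nb → Z (σ v) m = y m := by
      intro m hm
      by_cases hrow : (Nat.unpair m).1 = i
      · have hmpair : Nat.pair i (Nat.unpair m).2 = m := by
          conv_rhs => rw [← Nat.pair_unpair m, hrow]
        have h2 : (Nat.unpair m).2 ≤ m := Nat.unpair_right_le m
        rw [← hmpair, hZrow]
        have : σ v (Nat.unpair m).2 = false := by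
          simp [hσ, Nat.lt_of_le_of_lt h2 hm]
        rw [this]
        exact (hyN i _ le_rfl).symm
      · simp [hZ, hrow]
    constructor
    · constructor
      · intro j hj l
        have hji : j ≠ i := by omega
        rw [hZrow' _ _ _ hji]
        exact hyN j l (by omega)
      · intro hmem
        have := hmem i le_rfl (l0 + Nb)
        rw [hZrow, hσval] at this
        rw [hl0] at this
        exact Bool.noConfusion this
    · exact hNb _ hcyl
  -- countability argument
  by_contra hcon
  push_neg at hcon
  have hsub : {v : ℕ → Bool | ∃ l, v l = true} ⊆ (fun v => φ (Z (σ v))) ⁻¹' C := by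
    intro v hv
    obtain ⟨hL, hV'⟩ := key v hv
    exact hcon _ hL hV'
  have hinj : Injective (fun v => φ (Z (σ v))) := hφi.comp (hZinj.comp hσinj)
  have hcnt : ((fun v => φ (Z (σ v))) ⁻¹' C).Countable := hC.preimage hinj
  have hTcnt : {v : ℕ → Bool | ∃ l, v l = true}.Countable := hcnt.mono hsub
  apply not_countable_univ_bool
  have : (Set.univ : Set (ℕ → Bool)) ⊆
      {v : ℕ → Bool | ∃ l, v l = true} ∪ {fun _ => false} := by
    intro v _
    by_cases hv : ∃ l, v l = true
    · exact Or.inl hv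
    · push_neg at hv
      refine Or.inr ?_
      have : v = fun _ => false := by
        funext l
        have := hv l
        cases h : v l
        · rfl
        · exact absurd h (by simpa using this)
      simp [this]
  exact (hTcnt.union (Set.countable_singleton _)).mono this




section DbscLemmas

lemma dbsc_sub {f g : K → ℝ} (hf : DBSC f) (hg : DBSC g) : DBSC (f - g) := by
  obtain ⟨h1, k1, ⟨C1, hC1⟩, ⟨D1, hD1⟩, hl1, kl1, rfl⟩ := hf
  obtain ⟨h2, k2, ⟨C2, hC2⟩, ⟨D2, hD2⟩, hl2, kl2, rfl⟩ := hg
  refine ⟨h1 + k2, k1 + h2, ⟨C1 + D2, fun x => ?_⟩, ⟨D1 + C2, fun x => ?_⟩,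
    hl1.add kl2, kl1.add hl2, ?_⟩
  · calc |(h1 + k2) x| ≤ |h1 x| + |k2 x| := abs_add_le _ _
      _ ≤ C1 + D2 := add_le_add (hC1 x) (hD2 x)
  · calc |(k1 + h2) x| ≤ |k1 x| + |h2 x| := abs_add_le _ _
      _ ≤ D1 + C2 := add_le_add (hD1 x) (hC2 x)
  · funext x; simp [Pi.sub_apply]; ring

lemma dbsc_zero : DBSC (fun _ : K => (0:ℝ)) :=
  ⟨0, 0, ⟨0, by simp⟩, ⟨0, by simp⟩, lowerSemicontinuous_const, lowerSemicontinuous_const,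
    by funext x; simp⟩

lemma dbsc_add {f g : K → ℝ} (hf : DBSC f) (hg : DBSC g) : DBSC (f + g) := by
  have := dbsc_sub hf (dbsc_sub dbsc_zero hg)
  have he : f - ((fun _ : K => (0:ℝ)) - g) = f + g := by funext x; simp
  rwa [he] at this

lemma dbsc_indicator_closed {F : Set K} (hF : IsClosed F) (c : ℝ) :
    DBSC (Set.indicator F (fun _ => c)) := by
  rcases le_or_gt 0 c with hc | hc
  · refine ⟨fun _ => c, Set.indicator Fᶜ (fun _ => c), ⟨|c|, fun _ => by simp⟩, ⟨|c|, fun x => ?_⟩,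
      lowerSemicontinuous_const, hF.isOpen_compl.lowerSemicontinuous_indicator hc, ?_⟩
    · by_cases hx : x ∈ Fᶜ <;> simp [hx, abs_nonneg]
    · funext x
      by_cases hx : x ∈ F <;> simp [Set.indicator_apply, hx]
  · refine ⟨Set.indicator Fᶜ (fun _ => -c), fun _ => -c, ⟨|c|, fun x => ?_⟩,
      ⟨|c|, fun x => by simp [abs_neg]⟩,
      hF.isOpen_compl.lowerSemicontinuous_indicator (by linarith), lowerSemicontinuous_const, ?_⟩
    · by_cases hx : x ∈ Fᶜ <;> simp [hx, abs_neg, abs_nonneg]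
    · funext x
      by_cases hx : x ∈ F <;> simp [Set.indicator_apply, hx]

end DbscLemmas

variable (φ : (ℕ → Bool) → K)

open Classical in
/-- the limit function -/
noncomputable def fdef : K → ℝ := fun p =>
  if h : ∃ i, p ∈ φ '' Lset i then aseq h.choose else 0

/-- the approximating sequence -/
noncomputable def udef (n : ℕ) : K → ℝ := fun p =>
  ∑ i ∈ Finset.range n, Set.indicator (φ '' Lset i) (fun _ => aseq i) p

variable {φ}

lemma fdef_eq (hφi : Injective φ) {i : ℕ} {x : ℕ → Bool} (hx : x ∈ Lset i) :
    fdef φ (φ x) = aseq i := by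
  have hex : ∃ j, φ x ∈ φ '' Lset j := ⟨i, Set.mem_image_of_mem _ hx⟩
  simp only [fdef]
  rw [dif_pos hex]
  obtain ⟨x', hx', he⟩ := hex.choose_spec
  cases hφi he
  rw [Lset_eq_of_mem hx' hx]

lemma fdef_eq_zero {p : K} (hp : ∀ i, p ∉ φ '' Lset i) : fdef φ p = 0 := by
  simp only [fdef]
  rw [dif_neg]
  push_neg
  exact hp

lemma abs_fdef_le_one (p : K) : |fdef φ p| ≤ 1 := by
  simp only [fdef]
  split
  · exact abs_aseq_le_one _
  · simp

lemma udef_fdef_close (hφi : Injective φ) (n : ℕ) (p : K) :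
    |udef φ n p - fdef φ p| ≤ 1/(n+1) := by
  have hpos : (0:ℝ) ≤ 1/(n+1) := by positivity
  by_cases hex : ∃ i, p ∈ φ '' Lset i
  · obtain ⟨i, x, hx, rfl⟩ := hex
    rw [fdef_eq hφi hx]
    have hterm : ∀ j, j ≠ i →
        Set.indicator (φ '' Lset j) (fun _ => aseq j) (φ x) = 0 := by
      intro j hj
      apply Set.indicator_of_notMem
      rintro ⟨x', hx', he⟩
      cases hφi he
      exact hj (Lset_eq_of_mem hx' hx)
    by_cases hin : i < n
    · have : udef φ n (φ x) = aseq i := by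
        rw [udef]
        rw [Finset.sum_eq_single i]
        · exact Set.indicator_of_mem (Set.mem_image_of_mem _ hx) _
        · exact fun j _ hj => hterm j hj
        · intro hni; exact absurd (Finset.mem_range.mpr hin) hni
      rw [this]; simpa using hpos
    · have : udef φ n (φ x) = 0 := by
        rw [udef]
        apply Finset.sum_eq_zero
        intro j hj
        exact hterm j (by rw [Finset.mem_range] at hj; omega)
      rw [this]
      rw [zero_sub, abs_neg, abs_aseq]
      have hni : (n:ℝ) ≤ i := by exact_mod_cast Nat.le_of_not_lt hin
      exact one_div_le_one_div_of_le (by positivity) (by linarith)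
  · push_neg at hex
    have h1 : udef φ n p = 0 := by
      rw [udef]
      apply Finset.sum_eq_zero
      intro j _
      exact Set.indicator_of_notMem (hex j) _
    rw [h1, fdef_eq_zero hex, sub_zero, abs_zero]
    exact hpos

lemma dbsc_udef (hφc : Continuous φ) (hφi : Injective φ) (n : ℕ) : DBSC (udef φ n) := by
  have himgclosed : ∀ i, IsClosed (φ '' Nset i) := by
    intro i
    exact (((isClosed_Nset i).isCompact).image hφc).isClosed
  induction n with
  | zero =>
      have : udef φ 0 = fun _ : K => (0:ℝ) := by
        funext p; simp [udef]
      rw [this]; exact dbsc_zero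
  | succ n ih =>
      have hsplit : udef φ (n+1) = udef φ n +
          (Set.indicator (φ '' Nset (n+1)) (fun _ => aseq n) -
           Set.indicator (φ '' Nset n) (fun _ => aseq n)) := by
        funext p
        have himg : φ '' Lset n = φ '' Nset (n+1) \ φ '' Nset n :=
          Set.image_diff hφi _ _
        have hsubset : φ '' Nset n ⊆ φ '' Nset (n+1) :=
          Set.image_mono (Nset_mono (Nat.le_succ n))
        have hind : Set.indicator (φ '' Lset n) (fun _ => aseq n) p =
            Set.indicator (φ '' Nset (n+1)) (fun _ => aseq n) p -
            Set.indicator (φ '' Nset n) (fun _ => aseq n) p := by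
          rw [himg]
          by_cases h1 : p ∈ φ '' Nset n
          · rw [Set.indicator_of_notMem (fun h => h.2 h1),
              Set.indicator_of_mem (hsubset h1), Set.indicator_of_mem h1]
            ring
          · by_cases h2 : p ∈ φ '' Nset (n+1)
            · rw [Set.indicator_of_mem ((Set.mem_diff p).mpr ⟨h2, h1⟩),
                Set.indicator_of_mem h2, Set.indicator_of_notMem h1]
              ring
            · rw [Set.indicator_of_notMem (fun h => h2 h.1),
                Set.indicator_of_notMem h2, Set.indicator_of_notMem h1]
              try ring
        simp only [udef, Finset.sum_range_succ, Pi.add_apply, Pi.sub_apply]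
        rw [hind]
      rw [hsplit]
      exact dbsc_add ih (dbsc_sub (dbsc_indicator_closed (himgclosed (n+1)) _)
        (dbsc_indicator_closed (himgclosed n) _))




lemma fdef_not_S (hφc : Continuous φ) (hφi : Injective φ)
    (g : K → ℝ) (hg : DBSC g) : ¬ ({x | fdef φ x ≠ g x}).Countable := by
  intro hC
  obtain ⟨h, k, ⟨Ch, hCh⟩, ⟨Ck, hCk⟩, hlsc, klsc, rfl⟩ := hg
  set C := {x | fdef φ x ≠ (h - k) x} with hCdef
  set δ : ℕ → ℝ := fun i => 1/(4*(i+1)) with hδdef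
  have hδpos : ∀ i, 0 < δ i := fun i => by positivity
  -- the subtype of good points at level i
  -- step existence
  have step : ∀ i (y : {z : ℕ → Bool // z ∈ Lset i ∧ φ z ∉ C}),
      ∃ z : {z : ℕ → Bool // z ∈ Lset (i+1) ∧ φ z ∉ C},
        h (φ y.1) - δ i < h (φ z.1) ∧ k (φ y.1) - δ i < k (φ z.1) := by
    rintro i ⟨y, hyL, hyC⟩
    have E1 : ∀ᶠ q in 𝓝 (φ y), h (φ y) - δ i < h q :=
      hlsc (φ y) _ (by linarith [hδpos i])
    have E2 : ∀ᶠ q in 𝓝 (φ y), k (φ y) - δ i < k q :=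
      klsc (φ y) _ (by linarith [hδpos i])
    obtain ⟨z, hzL, hzV, hzC⟩ := exists_next φ hφc hφi hC (i+1)
      (Lset_subset i hyL) (E1.and E2)
    exact ⟨⟨z, hzL, hzC⟩, hzV.1, hzV.2⟩
  choose F hF1 hF2 using step
  -- initial point
  have init : ∃ z : {z : ℕ → Bool // z ∈ Lset 0 ∧ φ z ∉ C}, True := by
    have h0 : (fun _ => false : ℕ → Bool) ∈ Nset 0 := by
      intro j _ l; rfl
    obtain ⟨z, hzL, -, hzC⟩ := exists_next φ hφc hφi hC 0 h0 (univ_mem)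
    exact ⟨⟨z, hzL, hzC⟩, trivial⟩
  obtain ⟨z0, -⟩ := init
  -- the chain
  set Y : ∀ i : ℕ, {z : ℕ → Bool // z ∈ Lset i ∧ φ z ∉ C} :=
    fun i => Nat.rec z0 (fun i prev => F i prev) i with hYdef
  have hYsucc : ∀ i, Y (i+1) = F i (Y i) := fun i => rfl
  set s : ℕ → ℝ := fun i => h (φ (Y i).1) + k (φ (Y i).1) with hsdef
  have gval : ∀ i, h (φ (Y i).1) - k (φ (Y i).1) = aseq i := by
    intro i
    have hnc := (Y i).2.2
    have hth : fdef φ (φ (Y i).1) = (h - k) (φ (Y i).1) := by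
      by_contra hne
      exact hnc hne
    rw [← fdef_eq hφi (Y i).2.1 (φ := φ)]
    exact hth.symm
  have sstep : ∀ i, s i + 1/(2*(i+1)) ≤ s (i+1) := by
    intro i
    have h1 := hF1 i (Y i)
    have h2 := hF2 i (Y i)
    rw [← hYsucc i] at h1 h2
    have hg1 := gval i
    have hg2 := gval (i+1)
    have hgap := aseq_gap i
    have htpos : (0:ℝ) < (i:ℝ) + 1 := by positivity
    have hA : h (φ (Y i).1) - 1/(4*((i:ℝ)+1)) < h (φ (Y (i+1)).1) := h1
    have hB : k (φ (Y i).1) - 1/(4*((i:ℝ)+1)) < k (φ (Y (i+1)).1) := h2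
    have r1 : (2:ℝ)*(1/(4*((i:ℝ)+1))) = 1/(2*((i:ℝ)+1)) := by
      field_simp; ring
    have r2 : (1:ℝ)/((i:ℝ)+1) = 2*(1/(2*((i:ℝ)+1))) := by
      field_simp
    simp only [hsdef]
    rcases abs_cases (aseq (i+1) - aseq i) with ⟨he, _⟩ | ⟨he, _⟩
    · rw [he] at hgap; linarith
    · rw [he] at hgap; linarith
  have sbound : ∀ n, s 0 + (1/2) * ∑ i ∈ Finset.range n, (1/(i+1) : ℝ) ≤ s n := by
    intro n
    induction n with
    | zero => simp
    | succ n ih =>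
        have := sstep n
        rw [Finset.sum_range_succ]
        have : (1/2 : ℝ) * (1/(n+1)) = 1/(2*(n+1)) := by
          field_simp
        linarith [sstep n, ih, this]
  -- contradiction with harmonic divergence
  have hbnd : ∀ n, ∑ i ∈ Finset.range n, (1/(i+1) : ℝ) ≤ 2*(2*Ch + 2*Ck) := by
    intro n
    have h1 := sbound n
    have h2 : s n ≤ Ch + Ck := add_le_add (le_of_abs_le (hCh _)) (le_of_abs_le (hCk _))
    have h3 : -(Ch + Ck) ≤ s 0 := by
      have := abs_le.mp (hCh (φ (Y 0).1))
      have := abs_le.mp (hCk (φ (Y 0).1))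
      simp only [hsdef]
      linarith [(abs_le.mp (hCh (φ (Y 0).1))).1, (abs_le.mp (hCk (φ (Y 0).1))).1]
    set SS := ∑ i ∈ Finset.range n, (1/(i+1) : ℝ) with hSS
    clear_value SS
    clear_value s Y
    linarith
  obtain ⟨n, hn⟩ := (Real.tendsto_sum_range_one_div_nat_succ_atTop.eventually_gt_atTop
    (2*(2*Ch + 2*Ck))).exists
  exact absurd (hbnd n) (not_le.mpr hn)


end Stmt15Aux

open Stmt15Aux Set Function in
/-- Let K be a perfect Polish space. Then the sequential monotone closure
CD_ω(K)^{σm}, realized in B(K) as S = {f ∈ B(K) : ∃ g ∈ DBSC(K), [f≠g] at most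
countable}, is not uniformly complete: the principal ideal generated by the constant
function 1 (which is all of S) is not complete under the order-unit norm ‖·‖_{1_K},
i.e. there is a ‖·‖_∞-Cauchy sequence in S with no ‖·‖_∞-limit in S. -/
theorem stmt15 {K : Type*} [TopologicalSpace K] [PolishSpace K] [Nonempty K]
    (hperfect : ∀ x : K, ¬ IsOpen ({x} : Set K))
    (S : Set (K → ℝ))
    (hS : S = {f | Bdd f ∧ ∃ g : K → ℝ, DBSC g ∧ {x | f x ≠ g x}.Countable}) :
    ∃ u : ℕ → K → ℝ, (∀ n, u n ∈ S) ∧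
      (∀ ε : ℝ, 0 < ε → ∃ N : ℕ, ∀ m ≥ N, ∀ n ≥ N, ∀ x, |u m x - u n x| ≤ ε) ∧
      ¬ ∃ f ∈ S, ∀ ε : ℝ, 0 < ε → ∃ N : ℕ, ∀ n ≥ N, ∀ x, |u n x - f x| ≤ ε := by
  -- obtain a copy of the Cantor space inside K
  have hφ : ∃ φ : (ℕ → Bool) → K, Continuous φ ∧ Injective φ := by
    letI := TopologicalSpace.upgradeIsCompletelyMetrizable K
    have hperf : Perfect (Set.univ : Set K) := by
      refine ⟨isClosed_univ, fun x _ => ?_⟩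
      show (𝓝[≠] x ⊓ 𝓟 Set.univ).NeBot
      rw [principal_univ, inf_top_eq, Filter.neBot_iff]
      intro hbot
      exact hperfect x ((isOpen_singleton_iff_punctured_nhds x).mpr hbot)
    obtain ⟨φ, -, hc, hi⟩ := hperf.exists_nat_bool_injection univ_nonempty
    exact ⟨φ, hc, hi⟩
  obtain ⟨φ, hφc, hφi⟩ := hφ
  refine ⟨udef φ, ?_, ?_, ?_⟩
  · -- membership in S
    intro n
    rw [hS]
    refine ⟨⟨2, fun x => ?_⟩, udef φ n, dbsc_udef hφc hφi n, ?_⟩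
    · have h1 := udef_fdef_close hφi n x
      have h2 := abs_fdef_le_one (φ := φ) x
      have h3 : (1:ℝ)/(n+1) ≤ 1 := by
        rw [div_le_one (by positivity)]
        linarith [Nat.cast_nonneg (α := ℝ) n]
      calc |udef φ n x| = |(udef φ n x - fdef φ x) + fdef φ x| := by ring_nf
        _ ≤ |udef φ n x - fdef φ x| + |fdef φ x| := abs_add_le _ _
        _ ≤ 1/(n+1) + 1 := add_le_add h1 h2
        _ ≤ 2 := by linarith
    · have : {x | udef φ n x ≠ udef φ n x} ⊆ (∅ : Set K) := fun x hx => (hx rfl).elim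
      exact Set.Countable.mono this Set.countable_empty
  · -- uniform Cauchy
    intro ε hε
    obtain ⟨N, hN⟩ := exists_nat_gt (2/ε)
    have hN0 : (0:ℝ) < N := lt_trans (by positivity) hN
    refine ⟨N, fun m hm n hn x => ?_⟩
    have h1 := udef_fdef_close hφi m x
    have h2 := udef_fdef_close hφi n x
    have hm1 : (1:ℝ)/(m+1) ≤ 1/(N+1) := by
      apply one_div_le_one_div_of_le (by positivity)
      have : (N:ℝ) ≤ m := by exact_mod_cast hm
      linarith
    have hn1 : (1:ℝ)/(n+1) ≤ 1/(N+1) := by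
      apply one_div_le_one_div_of_le (by positivity)
      have : (N:ℝ) ≤ n := by exact_mod_cast hn
      linarith
    have hNe : (2:ℝ)/(N+1) ≤ ε := by
      rw [div_le_iff₀ (by positivity)]
      rw [div_lt_iff₀ hε] at hN
      nlinarith
    calc |udef φ m x - udef φ n x|
        ≤ |udef φ m x - fdef φ x| + |fdef φ x - udef φ n x| := abs_sub_le _ _ _
      _ = |udef φ m x - fdef φ x| + |udef φ n x - fdef φ x| := by rw [abs_sub_comm (fdef φ x)]
      _ ≤ 1/(m+1) + 1/(n+1) := add_le_add h1 h2
      _ ≤ 1/(N+1) + 1/(N+1) := add_le_add hm1 hn1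
      _ = 2/(N+1) := by ring
      _ ≤ ε := hNe
  · -- no limit in S
    rintro ⟨f', hf'S, hconv⟩
    have hfeq : f' = fdef φ := by
      funext x
      by_contra hne
      have hd : 0 < |f' x - fdef φ x| := abs_pos.mpr (sub_ne_zero.mpr hne)
      set d := |f' x - fdef φ x| with hddef
      obtain ⟨N1, hN1⟩ := hconv (d/3) (by positivity)
      obtain ⟨M, hM⟩ := exists_nat_gt (3/d)
      have hM0 : (0:ℝ) < M := lt_trans (by positivity) hM
      set n := max N1 M with hndef
      have h1 : |udef φ n x - f' x| ≤ d/3 := hN1 n (le_max_left _ _) x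
      have h2 := udef_fdef_close hφi n x
      have h3 : (1:ℝ)/(n+1) ≤ d/3 := by
        have hMn : (M:ℝ) ≤ n := by exact_mod_cast le_max_right N1 M
        have h5 : (1:ℝ)/(n+1) ≤ 1/M := by
          apply one_div_le_one_div_of_le hM0
          linarith
        have h4 : (1:ℝ)/M ≤ d/3 := by
          rw [div_le_div_iff₀ hM0 (by positivity)]
          rw [div_lt_iff₀ hd] at hM
          nlinarith
        linarith
      have : d ≤ d/3 + d/3 := by
        calc d = |f' x - fdef φ x| := hddef
          _ ≤ |f' x - udef φ n x| + |udef φ n x - fdef φ x| := abs_sub_le _ _ _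
          _ = |udef φ n x - f' x| + |udef φ n x - fdef φ x| := by rw [abs_sub_comm]
          _ ≤ d/3 + d/3 := add_le_add h1 (le_trans h2 h3)
      linarith
    rw [hS, hfeq] at hf'S
    obtain ⟨-, g, hgD, hgc⟩ := hf'S
    exact fdef_not_S hφc hφi g hgD hgc
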